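/- For every positive integer n and every real b with b > 0, the quantity (1/(n-1)!)·d^n/dz^n[(z+b)^{n-1}·log(z-1)] evaluated at z = b+1 equals (1/(2b+1))·(1 + (-1)^{n+1}·(1 + 1/b)^n). -/

import Mathlib

open Complex

noncomputable def cc (i : ℕ) : ℕ → ℂ
  | 0 => 0
  | (k+1) => ((i - k : ℕ) : ℂ) * cc i k + (i.descFactorial k : ℂ)

noncomputable def G (i k : ℕ) (z : ℂ) : ℂ :=
  if k ≤ i then
    (i.descFactorial k : ℂ) * (z - 1) ^ (i - k) * Complex.log (z - 1) + cc i k * (z - 1) ^ (i - k)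
  else
    (i.factorial : ℂ) * (-1) ^ (k - 1 - i) * ((k - 1 - i).factorial : ℂ) * (z - 1) ^ (-((k - i : ℕ) : ℤ))

lemma hstep (i k : ℕ) (z : ℂ) (hz : 0 < (z - 1).re) :
    HasDerivAt (G i k) (G i (k+1) z) z := by
  have hz1 : z - 1 ≠ 0 := by
    intro h; rw [h] at hz; simp at hz
  have hslit : z - 1 ∈ Complex.slitPlane := Or.inl hz
  have hlog : HasDerivAt (fun w : ℂ => Complex.log (w - 1)) ((z - 1)⁻¹) z := by
    have := (Complex.hasDerivAt_log hslit).comp z ((hasDerivAt_id z).sub_const 1)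
    simp at this ⊢; exact this
  have hpow : ∀ m : ℕ, HasDerivAt (fun w : ℂ => (w - 1) ^ m) ((m : ℂ) * (z - 1) ^ (m - 1)) z := by
    intro m
    have := (((hasDerivAt_id z).sub_const 1).pow m)
    simp at this ⊢; exact this
  by_cases hki : k ≤ i
  · set A : ℂ := (i.descFactorial k : ℂ) with hA
    set B : ℂ := cc i k with hB
    set e : ℕ := i - k with he
    have hfun : G i k = fun w : ℂ =>
        A * (w - 1) ^ e * Complex.log (w - 1) + B * (w - 1) ^ e := by
      funext w; simp [G, hki]; rfl
    have hder : HasDerivAt (G i k)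
        (A * ((e : ℂ) * (z - 1) ^ (e - 1)) * Complex.log (z - 1)
          + A * (z - 1) ^ e * (z - 1)⁻¹ + B * ((e : ℂ) * (z - 1) ^ (e - 1))) z := by
      rw [hfun]
      exact ((((hpow e).const_mul A).mul hlog).add ((hpow e).const_mul B))
    convert hder using 1
    rcases eq_or_lt_of_le hki with hki' | hki'
    · -- k = i : e = 0
      subst hki'
      have he0 : e = 0 := by omega
      rw [G, if_neg (by omega)]
      rw [show k + 1 - 1 - k = 0 from by omega, show k + 1 - k = 1 from by omega]
      rw [hA, hB, Nat.descFactorial_self, he0]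
      simp [zpow_neg, zpow_one]
    · -- k < i
      obtain ⟨m, rfl⟩ : ∃ m, i = k + m + 1 := ⟨i - k - 1, by omega⟩
      have he1 : e = m + 1 := by omega
      rw [G, if_pos (by omega)]
      rw [show k + m + 1 - (k + 1) = m from by omega, Nat.descFactorial_succ, cc,
        show k + m + 1 - k = m + 1 from by omega, he1, hA, hB]
      rw [mul_assoc ((((k+m+1).descFactorial k : ℕ)) : ℂ) ((z-1)^(m+1)) ((z-1)⁻¹),
        show (z - 1) ^ (m + 1) * (z - 1)⁻¹ = (z - 1) ^ m from by
          rw [pow_succ, mul_assoc, mul_inv_cancel₀ hz1, mul_one]]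
      push_cast
      ring
  · -- i < k
    obtain ⟨m, rfl⟩ : ∃ m, k = i + m + 1 := ⟨k - i - 1, by omega⟩
    have hfun : G i (i + m + 1) = fun w : ℂ =>
        ((i.factorial : ℂ) * (-1) ^ m * (m.factorial : ℂ)) * (w - 1) ^ (-(m + 1 : ℕ) : ℤ) := by
      funext w
      rw [G, if_neg (by omega)]
      rw [show i + m + 1 - 1 - i = m from by omega, show i + m + 1 - i = m + 1 from by omega]
    have hzp : HasDerivAt (fun w : ℂ => (w - 1) ^ (-(m + 1 : ℕ) : ℤ))
        ((-(m + 1 : ℕ) : ℤ) * (z - 1) ^ ((-(m + 1 : ℕ) : ℤ) - 1)) z := by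
      have := (hasDerivAt_zpow (-(m + 1 : ℕ) : ℤ) (z - 1) (Or.inl hz1)).comp z
        ((hasDerivAt_id z).sub_const 1)
      simp at this ⊢; exact this
    have hder := hzp.const_mul ((i.factorial : ℂ) * (-1) ^ m * (m.factorial : ℂ))
    rw [← hfun] at hder
    convert hder using 1
    · rfl
    · rfl
    rw [G, if_neg (by omega)]
    have h1 : i + m + 1 + 1 - 1 - i = m + 1 := by omega
    have h2 : i + m + 1 + 1 - i = m + 2 := by omega
    rw [h1, h2]
    have h3 : ((-(m + 1 : ℕ) : ℤ) - 1) = (-(m + 2 : ℕ) : ℤ) := by push_cast; ring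
    rw [h3, Nat.factorial_succ]
    push_cast
    ring

lemma step_lemma {f g g' : ℂ → ℂ} {U : Set ℂ} (hU : IsOpen U) (k : ℕ)
    (h1 : ∀ z ∈ U, iteratedDeriv k f z = g z)
    (h2 : ∀ z ∈ U, HasDerivAt g (g' z) z) :
    ∀ z ∈ U, iteratedDeriv (k+1) f z = g' z := by
  intro z hz
  rw [iteratedDeriv_succ]
  have heq : iteratedDeriv k f =ᶠ[nhds z] g :=
    Filter.eventuallyEq_of_mem (hU.mem_nhds hz) h1
  rw [heq.deriv_eq, (h2 z hz).deriv]

lemma main_formula (n : ℕ) (hn : 0 < n) (b : ℝ) (hb : 0 < b) (k : ℕ) :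
    ∀ z ∈ {w : ℂ | 0 < (w - 1).re},
      iteratedDeriv k (fun z : ℂ => (z + (b : ℂ)) ^ (n - 1) * Complex.log (z - 1)) z =
        ∑ i ∈ Finset.range n, ((n - 1).choose i : ℂ) * ((b : ℂ) + 1) ^ (n - 1 - i) * G i k z := by
  have hU : IsOpen {w : ℂ | 0 < (w - 1).re} := by
    have : Continuous fun w : ℂ => (w - 1).re := (Complex.continuous_re.comp (by continuity))
    exact isOpen_lt continuous_const this
  induction k with
  | zero =>
    intro z hz
    rw [iteratedDeriv_zero]
    have hbin : (z + (b : ℂ)) ^ (n - 1) =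
        ∑ i ∈ Finset.range n, ((n - 1).choose i : ℂ) * ((b : ℂ) + 1) ^ (n - 1 - i) * (z - 1) ^ i := by
      have : z + (b : ℂ) = (z - 1) + ((b : ℂ) + 1) := by ring
      rw [this, add_pow]
      rw [show n - 1 + 1 = n from by omega]
      apply Finset.sum_congr rfl
      intro i hi
      ring
    rw [hbin, Finset.sum_mul]
    apply Finset.sum_congr rfl
    intro i hi
    rw [G, if_pos (Nat.zero_le i)]
    simp [cc]
    ring
  | succ k ih =>
    apply step_lemma hU k ih
    intro z hz
    apply HasDerivAt.fun_sum
    intro i hi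
    exact (hstep i k z hz).const_mul _

theorem deriv_pow_mul_log_z_sub_one (n : ℕ) (hn : 0 < n) (b : ℝ) (hb : 0 < b) :
    (1 / ((n - 1).factorial : ℂ)) *
        iteratedDeriv n (fun z : ℂ => (z + (b : ℂ)) ^ (n - 1) * Complex.log (z - 1)) ((b : ℂ) + 1) =
      (1 / (2 * (b : ℂ) + 1)) * (1 + (-1) ^ (n + 1) * (1 + 1 / (b : ℂ)) ^ n) := by
  have hb0 : (b : ℂ) ≠ 0 := by
    exact_mod_cast ne_of_gt (by exact_mod_cast hb : (0:ℝ) < b)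
  have h2b : 2 * (b : ℂ) + 1 ≠ 0 := by
    intro h
    have : (2 * b + 1 : ℝ) = 0 := by exact_mod_cast (by push_cast at h ⊢; exact h : ((2*b+1 : ℝ) : ℂ) = 0)
    nlinarith
  have hmem : ((b : ℂ) + 1) ∈ {w : ℂ | 0 < (w - 1).re} := by
    simp [Complex.add_re, Complex.sub_re]
    exact_mod_cast hb
  rw [main_formula n hn b hb n _ hmem]
  have hterm : ∀ i ∈ Finset.range n,
      ((n - 1).choose i : ℂ) * ((b : ℂ) + 1) ^ (n - 1 - i) * G i n ((b : ℂ) + 1) =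
        ((n-1).factorial : ℂ) * ((b : ℂ) ^ i * (-((b:ℂ) + 1)) ^ (n - 1 - i) * (1 / (b:ℂ) ^ n)) := by
    intro i hi
    rw [Finset.mem_range] at hi
    rw [G, if_neg (by omega)]
    have hz : ((b : ℂ) + 1 - 1) = (b : ℂ) := by ring
    rw [hz]
    rw [show ((-(( n - i : ℕ)) : ℤ)) = -((n - i : ℕ) : ℤ) from rfl, zpow_neg, zpow_natCast]
    have hfac : ((n-1).choose i * i.factorial * (n - 1 - i).factorial : ℕ) = (n-1).factorial :=
      Nat.choose_mul_factorial_mul_factorial (by omega)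
    have hbpow : (b:ℂ) ^ i * (b:ℂ) ^ (n - i) = (b:ℂ) ^ n := by
      rw [← pow_add]; congr 1; omega
    have hnfac : (((n-1).choose i : ℂ) * (i.factorial : ℂ) * ((n - 1 - i).factorial : ℂ)) = ((n-1).factorial : ℂ) := by
      exact_mod_cast congrArg (Nat.cast : ℕ → ℂ) hfac
    rw [neg_pow]
    field_simp
    rw [← hnfac, ← hbpow, neg_pow ((b:ℂ) + 1)]
    ring
  rw [Finset.sum_congr rfl hterm, ← Finset.mul_sum, ← Finset.sum_mul]
  have hgeom := geom_sum₂_mul (b : ℂ) (-((b:ℂ) + 1)) n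
  have hsub : (b : ℂ) - (-((b:ℂ) + 1)) = 2 * (b:ℂ) + 1 := by ring
  rw [hsub] at hgeom
  have hsum : (∑ i ∈ Finset.range n, (b:ℂ) ^ i * (-((b:ℂ) + 1)) ^ (n - 1 - i)) =
      ((b:ℂ) ^ n - (-((b:ℂ) + 1)) ^ n) / (2 * (b:ℂ) + 1) := by
    rw [eq_div_iff h2b]; exact hgeom
  rw [hsum, neg_pow]
  have hfacne : ((n-1).factorial : ℂ) ≠ 0 := by exact_mod_cast (n-1).factorial_ne_zero
  rw [pow_succ]
  field_simp
  have hX : (b:ℂ)^n * ((b:ℂ)*(b:ℂ)⁻¹ + (b:ℂ)⁻¹)^n = (1+(b:ℂ))^n := by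
    rw [mul_inv_cancel₀ hb0, ← mul_pow, mul_add, mul_one, mul_inv_cancel₀ hb0]; ring
  linear_combination (1 + (b:ℂ)*2)⁻¹ * (-1)^n * hX
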